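/- With Ω, Ω̂ as above: if Ω = Ω_n > 1 for some n ≠ k, then Ω̂ > 1; and if Ω = Ω_k and Ω_k > 1/max(ρ_x^{1-λ}, (1-ρ_x)^{1-λ}) ≥ 1, then Ω̂ > 1. -/

import Mathlib

/-- Cases in which the inserted-node quantity `Ω̂` exceeds one. -/
theorem Omega_hat_gt_one (N k : ℕ) (hN : 1 ≤ N) (hk : k ∈ Finset.Icc 1 N)
    (ρx lam : ℝ) (hρ0 : 0 < ρx) (hρ1 : ρx < 1) (hlam0 : 0 < lam) (hlam1 : lam ≤ 1)
    (Ωf : ℕ → ℝ) (Ω Ωkl Ωkr Ωhat : ℝ)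
    (hΩ : Ω = (Finset.Icc 1 N).sup' (Finset.nonempty_Icc.2 hN) Ωf)
    (hΩkl : Ωkl = ρx ^ (1 - lam) * Ωf k)
    (hΩkr : Ωkr = (1 - ρx) ^ (1 - lam) * Ωf k)
    (hΩhat : Ωhat = ((Finset.Icc 1 N).erase k).fold max (max Ωkl Ωkr) Ωf) :
    ((∃ n ∈ Finset.Icc 1 N, n ≠ k ∧ Ω = Ωf n ∧ 1 < Ωf n) → 1 < Ωhat) ∧
    (Ω = Ωf k →
      1 / max (ρx ^ (1 - lam)) ((1 - ρx) ^ (1 - lam)) < Ωf k →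
      1 ≤ 1 / max (ρx ^ (1 - lam)) ((1 - ρx) ^ (1 - lam)) →
      1 < Ωhat) := by
  set M : ℝ := max (ρx ^ (1 - lam)) ((1 - ρx) ^ (1 - lam)) with hM
  have hMpos : 0 < M := lt_max_of_lt_left (Real.rpow_pos_of_pos hρ0 _)
  constructor
  · rintro ⟨n, hn, hnk, -, h1⟩
    rw [hΩhat, lt_iff_not_ge, Finset.fold_max_le]
    rintro ⟨-, h⟩
    exact absurd (h n (Finset.mem_erase.2 ⟨hnk, hn⟩)) (not_le.2 h1)
  · intro _ hlt hle
    rw [hΩhat, lt_iff_not_ge, Finset.fold_max_le]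
    rintro ⟨h, -⟩
    have hkpos : 0 < Ωf k := lt_of_lt_of_le (by positivity) (le_of_lt (lt_of_le_of_lt hle hlt))
    have : max Ωkl Ωkr = M * Ωf k := by
      rw [hΩkl, hΩkr, hM, max_mul_of_nonneg _ _ hkpos.le]
    rw [this] at h
    have : 1 < M * Ωf k := by
      have := (div_lt_iff₀ hMpos).1 hlt
      linarith [mul_comm (Ωf k) M]
    linarith
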